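/- For any non-empty graph H of order n′ and any connected graph G of order n ≥ 2, n ≤ dim_l(G ⊙ H) ≤ n(n′ − 1). -/

import Mathlib

open SimpleGraph

/-- A set `S` is a local metric generator for `G` if every pair of adjacent
vertices is distinguished (by distance) by some element of `S`. -/
def IsLocalMetricGenerator {α : Type*} (G : SimpleGraph α) (S : Set α) : Prop :=
  ∀ x y : α, G.Adj x y → ∃ v ∈ S, G.dist v x ≠ G.dist v y

/-- The local metric dimension of a graph. -/
noncomputable def localMetricDim {α : Type*} (G : SimpleGraph α) : ℕ :=
  sInf {k | ∃ S : Finset α, S.card = k ∧ IsLocalMetricGenerator G ↑S}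

/-- A local metric basis: a minimum-cardinality local metric generator. -/
def IsLocalMetricBasis {α : Type*} (G : SimpleGraph α) (S : Finset α) : Prop :=
  IsLocalMetricGenerator G ↑S ∧ S.card = localMetricDim G

/-- The corona product `G ⊙ H`. -/
def corona {α β : Type*} (G : SimpleGraph α) (H : SimpleGraph β) :
    SimpleGraph (α ⊕ α × β) :=
  SimpleGraph.fromRel (fun x y => match x, y with
    | Sum.inl a, Sum.inl a' => G.Adj a a'
    | Sum.inl a, Sum.inr p => a = p.1
    | Sum.inr p, Sum.inl a => a = p.1
    | Sum.inr p, Sum.inr q => p.1 = q.1 ∧ H.Adj p.2 q.2)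

/-- The join `K₁ + H`; the vertex of `K₁` is `none`. -/
def joinK1 {β : Type*} (H : SimpleGraph β) : SimpleGraph (Option β) :=
  SimpleGraph.fromRel (fun x y => match x, y with
    | none, some _ => True
    | some b, some b' => H.Adj b b'
    | _, _ => False)

/-- Eccentricity of a vertex (in `ℕ∞`). -/
noncomputable def ecc {α : Type*} (G : SimpleGraph α) (x : α) : ℕ∞ :=
  ⨆ y, G.edist x y

/-- Radius of a graph (in `ℕ∞`). -/
noncomputable def gradius {α : Type*} (G : SimpleGraph α) : ℕ∞ :=
  ⨅ x, ecc G x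

/-- Diameter of a graph (in `ℕ∞`). -/
noncomputable def gdiam {α : Type*} (G : SimpleGraph α) : ℕ∞ :=
  ⨆ x, ecc G x

section Aux
open Sum
variable {α β : Type*} {G : SimpleGraph α} {H : SimpleGraph β}

lemma corona_adj_inl_inl {a a' : α} :
    (corona G H).Adj (inl a) (inl a') ↔ G.Adj a a' := by
  simp only [corona, fromRel_adj]
  constructor
  · rintro ⟨-, h | h⟩
    · exact h
    · exact h.symm
  · exact fun h => ⟨by simp [h.ne], Or.inl h⟩

lemma corona_adj_inl_inr {a : α} {p : α × β} :
    (corona G H).Adj (inl a) (inr p) ↔ a = p.1 := by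
  simp only [corona, fromRel_adj]
  constructor
  · rintro ⟨-, h | h⟩ <;> exact h
  · exact fun h => ⟨by simp, Or.inl h⟩

lemma corona_adj_inr_inr {p q : α × β} :
    (corona G H).Adj (inr p) (inr q) ↔ p.1 = q.1 ∧ H.Adj p.2 q.2 := by
  simp only [corona, fromRel_adj]
  constructor
  · rintro ⟨-, ⟨h1, h2⟩ | ⟨h1, h2⟩⟩
    · exact ⟨h1, h2⟩
    · exact ⟨h1.symm, h2.symm⟩
  · rintro ⟨h1, h2⟩
    refine ⟨?_, Or.inl ⟨h1, h2⟩⟩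
    intro h
    rw [inr.injEq] at h
    exact H.irrefl (h ▸ h2)

def homInl (G : SimpleGraph α) (H : SimpleGraph β) : G →g corona G H :=
  ⟨inl, fun h => corona_adj_inl_inl.mpr h⟩

lemma pot_le_of_walk {V : Type*} {C : SimpleGraph V} (f : V → ℕ)
    (hf : ∀ u v, C.Adj u v → f v ≤ f u + 1) :
    ∀ {u v : V} (w : C.Walk u v), f v ≤ f u + w.length := by
  intro u v w
  induction w with
  | nil => simp
  | @cons x y z h p ih =>
    have h2 := hf x y h
    simp only [Walk.length_cons]
    omega

open Classical in
noncomputable def pot (G : SimpleGraph α) (a : α) : α ⊕ α × β → ℕ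
  | inl x => G.dist a x + 1
  | inr p => if p.1 = a then 0 else G.dist a p.1 + 2

lemma pot_lip (hG : G.Connected) (a : α) :
    ∀ u v, (corona G H).Adj u v → pot (β := β) G a v ≤ pot G a u + 1 := by
  rintro (x | p) (y | q) h
  · have h' := corona_adj_inl_inl.mp h
    have ht := hG.dist_triangle (u := a) (v := x) (w := y)
    have h1 : G.dist x y = 1 := dist_eq_one_iff_adj.mpr h'
    simp only [pot]
    omega
  · have hx : x = q.1 := corona_adj_inl_inr.mp h
    subst hx
    simp only [pot]
    split <;> omega
  · have hx : y = p.1 := corona_adj_inl_inr.mp h.symm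
    subst hx
    simp only [pot]
    by_cases h' : p.1 = a
    · rw [if_pos h', h']
      simp [SimpleGraph.dist_self]
    · rw [if_neg h']
      omega
  · have h' := (corona_adj_inr_inr.mp h).1
    have he : pot (β := β) G a (inr q) = pot G a (inr p) := by
      simp only [pot]
      rw [h']
    rw [he]
    omega

lemma corona_dist_inr_inl (hG : G.Connected) (a a' : α) (c : β) :
    (corona G H).dist (inr (a, c)) (inl a') = G.dist a a' + 1 := by
  obtain ⟨p, hp⟩ := hG.exists_walk_length_eq_dist a a'
  have hadj : (corona G H).Adj (inr (a, c)) (inl a) :=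
    (corona_adj_inl_inr.mpr rfl).symm
  let w : (corona G H).Walk (inr (a, c)) (inl a') :=
    Walk.cons hadj (p.map (homInl G H))
  have hle : (corona G H).dist (inr (a, c)) (inl a') ≤ G.dist a a' + 1 := by
    have := SimpleGraph.dist_le w
    have hl : (Walk.cons hadj (p.map (homInl G H))).length = G.dist a a' + 1 := by
      exact (Walk.length_cons _ _).trans (congrArg (· + 1) ((Walk.length_map _ _).trans hp))
    exact this.trans_eq hl
  have hre : (corona G H).Reachable (inr (a, c)) (inl a') := ⟨w⟩
  obtain ⟨q, hq⟩ := hre.exists_walk_length_eq_dist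
  have hpot := pot_le_of_walk (pot G a) (pot_lip hG a) q
  simp only [pot] at hpot
  rw [hq, if_pos trivial] at hpot
  omega

lemma corona_dist_inr_inr (hG : G.Connected) {a a' : α} (hne : a' ≠ a) (c c' : β) :
    (corona G H).dist (inr (a, c)) (inr (a', c')) = G.dist a a' + 2 := by
  obtain ⟨p, hp⟩ := hG.exists_walk_length_eq_dist a a'
  have hadj : (corona G H).Adj (inr (a, c)) (inl a) :=
    (corona_adj_inl_inr.mpr rfl).symm
  have hadj' : (corona G H).Adj (inl a') (inr (a', c')) := corona_adj_inl_inr.mpr rfl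
  let w : (corona G H).Walk (inr (a, c)) (inr (a', c')) :=
    (Walk.cons hadj (p.map (homInl G H))).concat hadj'
  have hle : (corona G H).dist (inr (a, c)) (inr (a', c')) ≤ G.dist a a' + 2 := by
    have := SimpleGraph.dist_le w
    have hl : ((Walk.cons hadj (p.map (homInl G H))).concat hadj').length = G.dist a a' + 2 := by
      exact (Walk.length_concat _ _).trans (congrArg (· + 1) ((Walk.length_cons _ _).trans
        (congrArg (· + 1) ((Walk.length_map _ _).trans hp))))
    exact this.trans_eq hl
  have hre : (corona G H).Reachable (inr (a, c)) (inr (a', c')) := ⟨w⟩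
  obtain ⟨q, hq⟩ := hre.exists_walk_length_eq_dist
  have hpot := pot_le_of_walk (pot G a) (pot_lip hG a) q
  simp only [pot] at hpot
  rw [hq, if_pos trivial, if_neg hne] at hpot
  omega

end Aux

section MainProof
open Sum Finset

/-- For non-empty `H` of order `n'` and connected `G` of order `n ≥ 2`,
`n ≤ dim_l (G ⊙ H) ≤ n (n' - 1)`. -/
theorem stmt16 {α β : Type*} [Fintype α] [Fintype β] (G : SimpleGraph α) (H : SimpleGraph β)
    (hG : G.Connected) (hn : 2 ≤ Fintype.card α) (hH : ∃ x y, H.Adj x y) :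
    Fintype.card α ≤ localMetricDim (corona G H) ∧
    localMetricDim (corona G H) ≤ Fintype.card α * (Fintype.card β - 1) := by
  classical
  obtain ⟨x₀, y₀, hxy⟩ := hH
  set S₀ : Finset (α ⊕ α × β) :=
    (Finset.univ ×ˢ ({x₀}ᶜ : Finset β)).image Sum.inr with hS₀
  have hmemS₀ : ∀ (a : α) (b : β), b ≠ x₀ → (inr (a, b) : α ⊕ α × β) ∈ S₀ := by
    intro a b hb
    simp [hS₀, hb]
  have hcardS₀ : S₀.card = Fintype.card α * (Fintype.card β - 1) := by
    rw [hS₀, Finset.card_image_of_injective _ Sum.inr_injective, Finset.card_product,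
      Finset.card_compl, Finset.card_singleton, Finset.card_univ]
  -- S₀ is a local metric generator
  have hgen : ∀ x y, (corona G H).Adj x y →
      ∃ v ∈ S₀, (corona G H).dist v x ≠ (corona G H).dist v y := by
    have mixed : ∀ (a : α) (p : α × β), a = p.1 →
        ∃ v ∈ S₀, (corona G H).dist v (inl a) ≠ (corona G H).dist v (inr p) := by
      rintro a ⟨p1, p2⟩ hp
      dsimp at hp
      subst hp
      by_cases hb : p2 = x₀
      · obtain ⟨a', ha'⟩ := Fintype.exists_ne_of_one_lt_card (by omega) a
        refine ⟨inr (a', y₀), hmemS₀ a' y₀ hxy.ne', ?_⟩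
        rw [corona_dist_inr_inl hG, corona_dist_inr_inr hG (Ne.symm ha')]
        omega
      · refine ⟨inr (a, p2), hmemS₀ a p2 hb, ?_⟩
        rw [corona_dist_inr_inl hG, SimpleGraph.dist_self, SimpleGraph.dist_self]
        omega
    rintro (a | p) (a' | q) h
    · have h' := corona_adj_inl_inl.mp h
      refine ⟨inr (a, y₀), hmemS₀ a y₀ hxy.ne', ?_⟩
      rw [corona_dist_inr_inl hG, corona_dist_inr_inl hG, SimpleGraph.dist_self]
      have := hG.pos_dist_of_ne h'.ne
      omega
    · exact mixed a q (corona_adj_inl_inr.mp h)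
    · obtain ⟨v, hv, hvd⟩ := mixed a' p (corona_adj_inl_inr.mp h.symm)
      exact ⟨v, hv, hvd.symm⟩
    · obtain ⟨h1, h2⟩ := corona_adj_inr_inr.mp h
      by_cases hb : p.2 = x₀
      · have hq : q.2 ≠ x₀ := fun hq => h2.ne (hq.trans hb.symm).symm
        refine ⟨inr q, hmemS₀ q.1 q.2 hq, ?_⟩
        rw [SimpleGraph.dist_self, dist_eq_one_iff_adj.mpr h.symm]
        omega
      · refine ⟨inr p, hmemS₀ p.1 p.2 hb, ?_⟩
        rw [SimpleGraph.dist_self, dist_eq_one_iff_adj.mpr h]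
        omega
  have hmemT : Fintype.card α * (Fintype.card β - 1) ∈
      {k | ∃ S : Finset (α ⊕ α × β), S.card = k ∧
        IsLocalMetricGenerator (corona G H) ↑S} :=
    ⟨S₀, hcardS₀, hgen⟩
  -- every generator has at least card α elements
  have hlower : ∀ S : Finset (α ⊕ α × β),
      (∀ x y, (corona G H).Adj x y →
        ∃ v ∈ S, (corona G H).dist v x ≠ (corona G H).dist v y) →
      Fintype.card α ≤ S.card := by
    intro S hS
    have h1 : ∀ a : α, ∃ b, (inr (a, b) : α ⊕ α × β) ∈ S := by
      intro a
      have hadj : (corona G H).Adj (inr (a, x₀)) (inr (a, y₀)) :=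
        corona_adj_inr_inr.mpr ⟨rfl, hxy⟩
      obtain ⟨v, hvS, hvd⟩ := hS _ _ hadj
      rcases v with a'' | ⟨a', c⟩
      · exfalso
        apply hvd
        rw [SimpleGraph.dist_comm (u := (inl a'' : α ⊕ α × β)) (v := inr (a, x₀)),
          SimpleGraph.dist_comm (u := (inl a'' : α ⊕ α × β)) (v := inr (a, y₀)),
          corona_dist_inr_inl hG, corona_dist_inr_inl hG]
      · by_cases ha : a' = a
        · exact ⟨c, ha ▸ hvS⟩
        · exfalso
          apply hvd
          rw [corona_dist_inr_inr hG (fun he => ha he.symm),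
            corona_dist_inr_inr hG (fun he => ha he.symm)]
    choose f hf using h1
    have := Finset.card_le_card_of_injOn (s := (Finset.univ : Finset α))
      (fun a => (inr (a, f a) : α ⊕ α × β))
      (fun a _ => hf a) (fun a _ a' _ he => by
        simpa using congrArg (Sum.elim id Prod.fst) he)
    simpa using this
  constructor
  · obtain ⟨S, hScard, hSgen⟩ := Nat.sInf_mem (Set.nonempty_of_mem hmemT)
    rw [localMetricDim, ← hScard]
    exact hlower S hSgen
  · exact Nat.sInf_le hmemT

end MainProof
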